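/- Let X, Y, H, V be vector fields with [X,Y] = −X, [X,H] = K·E²·V, [X,V] = −H, where E, K are functions with X(E) = 0, and let q satisfy the Riccati equation X(q) + q² + E²·K = 0. Then [X, H + qV] = −q·(H + qV). -/

import Mathlib

open Real

/-- On a negatively curved surface, a solution `q` of the Riccati equation
`Xq + q² + E² K = 0` defines an eigendirection of `ad_X`: `[X, H + qV] = -q (H + qV)`,
given `[X,Y] = -X`, `[X,H] = K E² V`, `[X,V] = -H` and `XE = 0`. -/
theorem stmt12 {M : Type*} [NormedAddCommGroup M] [NormedSpace ℝ M]
    (X Y H V : M → M) (E K q : M → ℝ)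
    (hXs : ContDiff ℝ 2 X) (hYs : ContDiff ℝ 2 Y) (hHs : ContDiff ℝ 2 H)
    (hVs : ContDiff ℝ 2 V) (hEs : ContDiff ℝ 2 E) (hqs : ContDiff ℝ 2 q)
    (hXE : ∀ x, fderiv ℝ E x (X x) = 0)
    (hXY : ∀ x, fderiv ℝ Y x (X x) - fderiv ℝ X x (Y x) = -X x)
    (hXH : ∀ x, fderiv ℝ H x (X x) - fderiv ℝ X x (H x) = (K x * (E x) ^ 2) • V x)
    (hXV : ∀ x, fderiv ℝ V x (X x) - fderiv ℝ X x (V x) = -H x)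
    (hRic : ∀ x, fderiv ℝ q x (X x) + (q x) ^ 2 + (E x) ^ 2 * K x = 0) :
    ∀ x, fderiv ℝ (fun y => H y + q y • V y) x (X x)
        - fderiv ℝ X x (H x + q x • V x)
        = (-(q x)) • (H x + q x • V x) := by
  intro x
  have hH : DifferentiableAt ℝ H x := (hHs.differentiable two_ne_zero).differentiableAt
  have hV : DifferentiableAt ℝ V x := (hVs.differentiable two_ne_zero).differentiableAt
  have hq : DifferentiableAt ℝ q x := (hqs.differentiable two_ne_zero).differentiableAt
  have hd : fderiv ℝ (fun y => H y + q y • V y) x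
      = fderiv ℝ H x + (fderiv ℝ q x).smulRight (V x) + q x • fderiv ℝ V x := by
    rw [fderiv_fun_add hH (hq.fun_smul hV), fderiv_fun_smul hq hV]; abel
  have hX : (fderiv ℝ X x) (q x • V x) = q x • (fderiv ℝ X x) (V x) := by
    simp [map_smul]
  have hr := hRic x
  have hh := hXH x
  have hv := hXV x
  rw [hd]
  simp only [ContinuousLinearMap.add_apply, ContinuousLinearMap.smulRight_apply,
    ContinuousLinearMap.smul_apply, map_add, hX]
  have hq' : fderiv ℝ q x (X x) = -((q x) ^ 2 + (E x) ^ 2 * K x) := by linarith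
  rw [sub_eq_iff_eq_add] at hv hh
  have hV' : fderiv ℝ V x (X x) = fderiv ℝ X x (V x) - H x := by rw [hv]; abel
  have hH' : fderiv ℝ H x (X x) = fderiv ℝ X x (H x) + (K x * (E x) ^ 2) • V x := by rw [hh]; abel
  rw [hq', hV', hH']
  simp only [smul_sub, smul_add, neg_smul, smul_smul]
  module
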